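/- Let m ≥ 3, let r > 0, and let a_1 < a_2 < … < a_m be real numbers with a_m − a_1 < 2r. For each i let C_i be the circle of radius r centered at (a_i, 0) in ℝ². Then: (a) every two of the circles C_1, …, C_m intersect in exactly two points; (b) no point of the plane lies on three of the circles; and (c) for all i < j < k, both intersection points of C_i and C_k lie in the open disk of C_j, both intersection points of C_i and C_j lie strictly outside the closed disk of C_k, and both intersection points of C_j and C_k lie strictly outside the closed disk of C_i. In particular every triple of these circles is NonKrupp. -/

import Mathlib

noncomputable section

/-- The Euclidean plane. -/
abbrev E2 := EuclideanSpace ℝ (Fin 2)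

/-- The point `(x, y)` of the plane. -/
def pt (x y : ℝ) : E2 := WithLp.toLp 2 ![x, y]

/-- The circle with center `c` and radius `r` separates the points `p` and `q`
(not lying on it) if exactly one of them lies in its open disk. -/
def Separates (c : E2) (r : ℝ) (p q : E2) : Prop :=
  Xor' (p ∈ Metric.ball c r) (q ∈ Metric.ball c r)

/-- The circle with center `c`, radius `r` does not separate the two intersection points of
the other two circles. -/
def NonSepInt (c : E2) (r : ℝ) (c₁ : E2) (r₁ : ℝ) (c₂ : E2) (r₂ : ℝ) : Prop :=
  ∀ p q : E2, p ≠ q → Metric.sphere c₁ r₁ ∩ Metric.sphere c₂ r₂ = {p, q} →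
    ¬ Separates c r p q

lemma distsq (p : E2) (d : ℝ) : dist p (pt d 0) ^ 2 = (p 0 - d)^2 + (p 1)^2 := by
  rw [EuclideanSpace.dist_eq, Real.sq_sqrt (by positivity)]
  simp [Fin.sum_univ_two, pt, Real.dist_eq, sq_abs]

lemma e2eta (x : E2) : x = WithLp.toLp 2 ![x 0, x 1] := by
  ext i; fin_cases i <;> rfl

lemma dist_eq_of_sq {p q : E2} {r : ℝ} (hr : 0 ≤ r) (h : dist p q ^ 2 = r ^ 2) :
    dist p q = r := by
  have h1 : (dist p q - r) * (dist p q + r) = 0 := by linear_combination h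
  have h2 := dist_nonneg (x := p) (y := q)
  rcases mul_eq_zero.mp h1 with h3 | h3 <;> linarith

lemma key (r b c d : ℝ) (hbc : b ≠ c) (p : E2)
    (hpb : dist p (pt b 0) = r) (hpc : dist p (pt c 0) = r) :
    dist p (pt d 0) ^ 2 = r ^ 2 + (b - d) * (c - d) := by
  have e1 : (p 0 - b)^2 + (p 1)^2 = r^2 := by rw [← distsq, hpb]
  have e2 : (p 0 - c)^2 + (p 1)^2 = r^2 := by rw [← distsq, hpc]
  have hx : 2 * p 0 = b + c := by
    have h0 : (c - b) * (2 * p 0 - b - c) = 0 := by linear_combination e1 - e2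
    rcases mul_eq_zero.mp h0 with h3 | h3
    · exact absurd (by linarith : b = c) hbc
    · linarith
  rw [distsq]
  linear_combination e1 + (b - d) * hx

lemma two_circ (r b c : ℝ) (hr : 0 < r) (hbc : b ≠ c) (h4 : (b - c)^2 < 4 * r^2) :
    ∃ p q : E2, p ≠ q ∧
      Metric.sphere (pt b 0) r ∩ Metric.sphere (pt c 0) r = {p, q} := by
  set h := Real.sqrt (r^2 - ((b-c)/2)^2) with hdef
  have hh2 : h^2 = r^2 - ((b-c)/2)^2 := Real.sq_sqrt (by nlinarith)
  have hhpos : 0 < h := Real.sqrt_pos.mpr (by nlinarith)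
  refine ⟨WithLp.toLp 2 ![(b+c)/2, h], WithLp.toLp 2 ![(b+c)/2, -h], ?_, ?_⟩
  · intro he
    have := congrArg (fun v : E2 => v 1) he
    simp at this
    linarith
  · ext x
    simp only [Set.mem_inter_iff, Metric.mem_sphere, Set.mem_insert_iff,
      Set.mem_singleton_iff]
    constructor
    · rintro ⟨h1, h2⟩
      have e1 : (x 0 - b)^2 + (x 1)^2 = r^2 := by rw [← distsq, h1]
      have e2 : (x 0 - c)^2 + (x 1)^2 = r^2 := by rw [← distsq, h2]
      have hx : x 0 = (b+c)/2 := by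
        have h0 : (c - b) * (2 * x 0 - b - c) = 0 := by linear_combination e1 - e2
        rcases mul_eq_zero.mp h0 with h3 | h3
        · exact absurd (by linarith : b = c) hbc
        · linarith
      have hy2 : (x 1)^2 = h^2 := by nlinarith [e1, hh2, hx]
      have hy' : x 1 = h ∨ x 1 = -h := by
        have h0 : (x 1 - h) * (x 1 + h) = 0 := by linear_combination hy2
        rcases mul_eq_zero.mp h0 with h3 | h3
        · left; linarith
        · right; linarith
      rcases hy' with h3 | h3
      · left; rw [e2eta x, hx, h3]
      · right; rw [e2eta x, hx, h3]
    · have m0 : (WithLp.toLp 2 ![(b+c)/2, h] : E2) 0 = (b+c)/2 := rfl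
      have m1 : (WithLp.toLp 2 ![(b+c)/2, h] : E2) 1 = h := rfl
      have n0 : (WithLp.toLp 2 ![(b+c)/2, -h] : E2) 0 = (b+c)/2 := rfl
      have n1 : (WithLp.toLp 2 ![(b+c)/2, -h] : E2) 1 = -h := rfl
      rintro (rfl | rfl) <;> constructor <;>
        [skip; skip; skip; skip] <;>
        · apply dist_eq_of_sq hr.le
          rw [distsq]
          first
          | (rw [m0, m1]; linear_combination hh2)
          | (rw [n0, n1]; linear_combination hh2)

lemma dist_lt_of_sq {p q : E2} {r : ℝ} (hr : 0 < r) (h : dist p q ^ 2 < r ^ 2) :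
    dist p q < r := by nlinarith [dist_nonneg (x := p) (y := q)]

lemma dist_gt_of_sq {p q : E2} {r : ℝ} (hr : 0 < r) (h : r ^ 2 < dist p q ^ 2) :
    r < dist p q := by nlinarith [dist_nonneg (x := p) (y := q)]

/-- For `m ≥ 3`, `r > 0` and real numbers `a 1 < a 2 < … < a m` with `a m − a 1 < 2r`,
the circles `C i` of radius `r` centered at `(a i, 0)` satisfy: (a) every two of them meet in
exactly two points; (b) no point lies on three of them; (c) for `i < j < k`, both points of
`C i ∩ C k` lie in the open disk of `C j`, both points of `C i ∩ C j` lie strictly outside the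
closed disk of `C k`, and both points of `C j ∩ C k` lie strictly outside the closed disk of
`C i`.  In particular every triple of these circles is NonKrupp. -/
theorem stmt5 (m : ℕ) (hm : 3 ≤ m) (r : ℝ) (hr : 0 < r) (a : ℕ → ℝ)
    (hmono : ∀ i j : ℕ, 1 ≤ i → i < j → j ≤ m → a i < a j)
    (hgap : a m - a 1 < 2 * r) :
    let C : ℕ → Set E2 := fun i => Metric.sphere (pt (a i) 0) r
    (∀ i j : ℕ, 1 ≤ i → i ≤ m → 1 ≤ j → j ≤ m → i ≠ j →
      ∃ p q : E2, p ≠ q ∧ C i ∩ C j = {p, q}) ∧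
    (∀ i j k : ℕ, 1 ≤ i → i ≤ m → 1 ≤ j → j ≤ m → 1 ≤ k → k ≤ m →
      i ≠ j → i ≠ k → j ≠ k →
      ∀ x : E2, ¬ (x ∈ C i ∧ x ∈ C j ∧ x ∈ C k)) ∧
    (∀ i j k : ℕ, 1 ≤ i → i < j → j < k → k ≤ m →
      (∀ p ∈ C i ∩ C k, dist p (pt (a j) 0) < r) ∧
      (∀ p ∈ C i ∩ C j, r < dist p (pt (a k) 0)) ∧
      (∀ p ∈ C j ∩ C k, r < dist p (pt (a i) 0))) ∧
    (∀ i j k : ℕ, 1 ≤ i → i ≤ m → 1 ≤ j → j ≤ m → 1 ≤ k → k ≤ m →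
      i ≠ j → i ≠ k → j ≠ k →
      NonSepInt (pt (a i) 0) r (pt (a j) 0) r (pt (a k) 0) r) := by
  intro C
  have hle : ∀ i : ℕ, 1 ≤ i → i ≤ m → a 1 ≤ a i ∧ a i ≤ a m := by
    intro i h1 h2
    constructor
    · rcases eq_or_lt_of_le h1 with h3 | h3
      · rw [← h3]
      · exact (hmono 1 i le_rfl h3 h2).le
    · rcases eq_or_lt_of_le h2 with h3 | h3
      · rw [h3]
      · exact (hmono i m h1 h3 le_rfl).le
  have ham : a 1 ≤ a m := (hle 1 le_rfl (by omega)).1.trans (hle 1 le_rfl (by omega)).2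
  have hne : ∀ i j : ℕ, 1 ≤ i → i ≤ m → 1 ≤ j → j ≤ m → i ≠ j → a i ≠ a j := by
    intro i j h1 h2 h3 h4 h5
    rcases h5.lt_or_gt with h6 | h6
    · exact (hmono i j h1 h6 h4).ne
    · exact (hmono j i h3 h6 h2).ne'
  have hbound : ∀ i j : ℕ, 1 ≤ i → i ≤ m → 1 ≤ j → j ≤ m → (a i - a j)^2 < 4 * r^2 := by
    intro i j h1 h2 h3 h4
    obtain ⟨hi1, hi2⟩ := hle i h1 h2
    obtain ⟨hj1, hj2⟩ := hle j h3 h4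
    nlinarith [mul_nonneg (by linarith : (0:ℝ) ≤ a m - a 1 - (a i - a j))
        (by linarith : (0:ℝ) ≤ a m - a 1 + (a i - a j)),
      mul_pos (by linarith : (0:ℝ) < 2*r - (a m - a 1))
        (by linarith : (0:ℝ) < 2*r + (a m - a 1))]
  refine ⟨?_, ?_, ?_, ?_⟩
  · intro i j h1 h2 h3 h4 h5
    exact two_circ r (a i) (a j) hr (hne i j h1 h2 h3 h4 h5) (hbound i j h1 h2 h3 h4)
  · intro i j k h1 h2 h3 h4 h5 h6 hij hik hjk x ⟨hxi, hxj, hxk⟩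
    have hxi' : dist x (pt (a i) 0) = r := hxi
    have hxj' : dist x (pt (a j) 0) = r := hxj
    have hxk' : dist x (pt (a k) 0) = r := hxk
    have hk := key r (a i) (a j) (a k) (hne i j h1 h2 h3 h4 hij) x hxi' hxj'
    rw [hxk'] at hk
    have h0 : (a i - a k) * (a j - a k) = 0 := by linarith
    rcases mul_eq_zero.mp h0 with h7 | h7
    · exact hne i k h1 h2 h5 h6 hik (by linarith)
    · exact hne j k h3 h4 h5 h6 hjk (by linarith)
  · intro i j k h1 hij hjk hkm
    have h2 : i ≤ m := by omega
    have h3 : 1 ≤ j := by omega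
    have h4 : j ≤ m := by omega
    have h5 : 1 ≤ k := by omega
    have hAij : a i < a j := hmono i j h1 hij h4
    have hAjk : a j < a k := hmono j k h3 hjk hkm
    have hAik : a i < a k := lt_trans hAij hAjk
    refine ⟨?_, ?_, ?_⟩
    · rintro p ⟨hp1, hp2⟩
      have hk := key r (a i) (a k) (a j) hAik.ne p hp1 hp2
      exact dist_lt_of_sq hr (by nlinarith)
    · rintro p ⟨hp1, hp2⟩
      have hk := key r (a i) (a j) (a k) hAij.ne p hp1 hp2
      exact dist_gt_of_sq hr (by nlinarith)
    · rintro p ⟨hp1, hp2⟩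
      have hk := key r (a j) (a k) (a i) hAjk.ne p hp1 hp2
      exact dist_gt_of_sq hr (by nlinarith)
  · intro i j k h1 h2 h3 h4 h5 h6 hij hik hjk p q hpq hset hSep
    have hp : p ∈ Metric.sphere (pt (a j) 0) r ∩ Metric.sphere (pt (a k) 0) r := by
      rw [hset]; exact Set.mem_insert _ _
    have hq : q ∈ Metric.sphere (pt (a j) 0) r ∩ Metric.sphere (pt (a k) 0) r := by
      rw [hset]; exact Set.mem_insert_of_mem _ rfl
    have kp := key r (a j) (a k) (a i) (hne j k h3 h4 h5 h6 hjk) p hp.1 hp.2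
    have kq := key r (a j) (a k) (a i) (hne j k h3 h4 h5 h6 hjk) q hq.1 hq.2
    have hd : dist p (pt (a i) 0) = dist q (pt (a i) 0) := by
      have hsq : dist p (pt (a i) 0) ^ 2 = dist q (pt (a i) 0) ^ 2 := by
        rw [kp, kq]
      have h0 : (dist p (pt (a i) 0) - dist q (pt (a i) 0)) *
          (dist p (pt (a i) 0) + dist q (pt (a i) 0)) = 0 := by linear_combination hsq
      have hnn1 := dist_nonneg (x := p) (y := pt (a i) 0)
      have hnn2 := dist_nonneg (x := q) (y := pt (a i) 0)
      rcases mul_eq_zero.mp h0 with h7 | h7 <;> linarith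
    rcases hSep with ⟨hb1, hb2⟩ | ⟨hb1, hb2⟩ <;>
      simp only [Metric.mem_ball] at hb1 hb2
    · rw [hd] at hb1; exact hb2 hb1
    · rw [← hd] at hb1; exact hb2 hb1
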